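/- Let α, θ be real with sinα ≠ 0, and z, ζ complex with z·conj(ζ)·sin(α+kθ) - (z+conj(ζ))·sin(kθ) - sin(α-kθ) ≠ 0 and conj(z)·sin(α-θ) + sinθ ≠ 0. Substituting z = (-conj(w)·sinθ + sin(α+θ))/(conj(w)·sin(α-θ) + sinθ) (i.e. z is the reflection of w in the circle C₀), the identity (conj(ζ)·sin(α+kθ) - sin(kθ)) / (z·conj(ζ)·sin(α+kθ) - (z+conj(ζ))·sin(kθ) - sin(α-kθ)) = -((conj(w)·sin(α-θ)+sinθ)/sinα) · (conj(ζ)·sin(α+kθ) - sin(kθ)) / (conj(w)·conj(ζ)·sin((k+1)θ) + conj(w)·sin(α-(k+1)θ) - conj(ζ)·sin(α+(k+1)θ) + sin((k+1)θ)) holds. -/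
import Mathlib


theorem stmt18 (α θ k : ℝ) (hα : Real.sin α ≠ 0) (w z ζ : ℂ)
    (hC : (starRingEnd ℂ) w * (Real.sin (α - θ) : ℂ) + (Real.sin θ : ℂ) ≠ 0)
    (hz : z = (-((starRingEnd ℂ) w) * (Real.sin θ : ℂ) + (Real.sin (α + θ) : ℂ)) /
              ((starRingEnd ℂ) w * (Real.sin (α - θ) : ℂ) + (Real.sin θ : ℂ)))
    (hden : z * (starRingEnd ℂ) ζ * (Real.sin (α + k * θ) : ℂ) -
            (z + (starRingEnd ℂ) ζ) * (Real.sin (k * θ) : ℂ) - (Real.sin (α - k * θ) : ℂ) ≠ 0) :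
    ((starRingEnd ℂ) ζ * (Real.sin (α + k * θ) : ℂ) - (Real.sin (k * θ) : ℂ)) /
      (z * (starRingEnd ℂ) ζ * (Real.sin (α + k * θ) : ℂ) -
        (z + (starRingEnd ℂ) ζ) * (Real.sin (k * θ) : ℂ) - (Real.sin (α - k * θ) : ℂ))
    = -(((starRingEnd ℂ) w * (Real.sin (α - θ) : ℂ) + (Real.sin θ : ℂ)) / (Real.sin α : ℂ)) *
      (((starRingEnd ℂ) ζ * (Real.sin (α + k * θ) : ℂ) - (Real.sin (k * θ) : ℂ)) /
        ((starRingEnd ℂ) w * (starRingEnd ℂ) ζ * (Real.sin ((k + 1) * θ) : ℂ) +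
          (starRingEnd ℂ) w * (Real.sin (α - (k + 1) * θ) : ℂ) -
          (starRingEnd ℂ) ζ * (Real.sin (α + (k + 1) * θ) : ℂ) + (Real.sin ((k + 1) * θ) : ℂ))) := by
  have hα' : (Real.sin α : ℂ) ≠ 0 := Complex.ofReal_ne_zero.mpr hα
  set cw := (starRingEnd ℂ) w with hcw
  set cζ := (starRingEnd ℂ) ζ with hcζ
  have hPyth : (Real.sin α : ℂ)^2 + (Real.cos α : ℂ)^2 = 1 := by
    have := Real.sin_sq_add_cos_sq α
    exact_mod_cast congrArg Complex.ofReal this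
  have E1 : ((Real.sin (α + k*θ) : ℝ) : ℂ)
      = (Real.sin α : ℂ)*(Real.cos (k*θ) : ℂ) + (Real.cos α : ℂ)*(Real.sin (k*θ) : ℂ) := by
    rw [Real.sin_add]; push_cast; ring
  have E2 : ((Real.sin (α - k*θ) : ℝ) : ℂ)
      = (Real.sin α : ℂ)*(Real.cos (k*θ) : ℂ) - (Real.cos α : ℂ)*(Real.sin (k*θ) : ℂ) := by
    rw [Real.sin_sub]; push_cast; ring
  have E3 : ((Real.sin (α + θ) : ℝ) : ℂ)
      = (Real.sin α : ℂ)*(Real.cos θ : ℂ) + (Real.cos α : ℂ)*(Real.sin θ : ℂ) := by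
    rw [Real.sin_add]; push_cast; ring
  have E4 : ((Real.sin (α - θ) : ℝ) : ℂ)
      = (Real.sin α : ℂ)*(Real.cos θ : ℂ) - (Real.cos α : ℂ)*(Real.sin θ : ℂ) := by
    rw [Real.sin_sub]; push_cast; ring
  have E5 : ((Real.sin ((k + 1) * θ) : ℝ) : ℂ)
      = (Real.sin (k*θ) : ℂ)*(Real.cos θ : ℂ) + (Real.cos (k*θ) : ℂ)*(Real.sin θ : ℂ) := by
    rw [show (k+1)*θ = k*θ + θ by ring, Real.sin_add]; push_cast; ring
  have E7 : ((Real.sin (α - (k + 1) * θ) : ℝ) : ℂ)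
      = (Real.sin α : ℂ)*((Real.cos (k*θ) : ℂ)*(Real.cos θ : ℂ) - (Real.sin (k*θ) : ℂ)*(Real.sin θ : ℂ))
        - (Real.cos α : ℂ)*((Real.sin (k*θ) : ℂ)*(Real.cos θ : ℂ) + (Real.cos (k*θ) : ℂ)*(Real.sin θ : ℂ)) := by
    rw [show α - (k+1)*θ = α - (k*θ + θ) by ring, Real.sin_sub, Real.sin_add, Real.cos_add]
    push_cast; ring
  have E8 : ((Real.sin (α + (k + 1) * θ) : ℝ) : ℂ)
      = (Real.sin α : ℂ)*((Real.cos (k*θ) : ℂ)*(Real.cos θ : ℂ) - (Real.sin (k*θ) : ℂ)*(Real.sin θ : ℂ))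
        + (Real.cos α : ℂ)*((Real.sin (k*θ) : ℂ)*(Real.cos θ : ℂ) + (Real.cos (k*θ) : ℂ)*(Real.sin θ : ℂ)) := by
    rw [show α + (k+1)*θ = α + (k*θ + θ) by ring, Real.sin_add, Real.sin_add, Real.cos_add]
    push_cast; ring
  have hzD : z * (cw * (Real.sin (α - θ) : ℂ) + (Real.sin θ : ℂ))
      = -cw * (Real.sin θ : ℂ) + (Real.sin (α + θ) : ℂ) := by
    rw [hz, div_mul_cancel₀ _ hC]
  rw [E3, E4] at hzD
  have hAD : (z * cζ * (Real.sin (α + k * θ) : ℂ) -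
        (z + cζ) * (Real.sin (k * θ) : ℂ) - (Real.sin (α - k * θ) : ℂ)) *
        (cw * (Real.sin (α - θ) : ℂ) + (Real.sin θ : ℂ))
      = -(Real.sin α : ℂ) *
        (cw * cζ * (Real.sin ((k + 1) * θ) : ℂ) + cw * (Real.sin (α - (k + 1) * θ) : ℂ) -
          cζ * (Real.sin (α + (k + 1) * θ) : ℂ) + (Real.sin ((k + 1) * θ) : ℂ)) := by
    rw [E1, E2, E4, E5, E7, E8]
    linear_combination
      (cζ * ((Real.sin α : ℂ)*(Real.cos (k*θ) : ℂ) + (Real.cos α : ℂ)*(Real.sin (k*θ) : ℂ))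
        - (Real.sin (k*θ) : ℂ)) * hzD
      + (cζ - cw) * (Real.sin θ : ℂ) * (Real.sin (k*θ) : ℂ) * hPyth
  have hDnew0 : cw * cζ * (Real.sin ((k + 1) * θ) : ℂ) + cw * (Real.sin (α - (k + 1) * θ) : ℂ) -
      cζ * (Real.sin (α + (k + 1) * θ) : ℂ) + (Real.sin ((k + 1) * θ) : ℂ) ≠ 0 := by
    intro h
    rw [h, mul_zero] at hAD
    rcases mul_eq_zero.1 hAD with h1 | h2
    · exact hden h1
    · exact hC h2
  have hsD : (Real.sin α : ℂ) * (cw * cζ * (Real.sin ((k + 1) * θ) : ℂ) +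
      cw * (Real.sin (α - (k + 1) * θ) : ℂ) - cζ * (Real.sin (α + (k + 1) * θ) : ℂ) +
      (Real.sin ((k + 1) * θ) : ℂ)) ≠ 0 := mul_ne_zero hα' hDnew0
  rw [neg_mul, div_mul_div_comm, ← neg_div, div_eq_div_iff hden hsD]
  linear_combination (cζ * (Real.sin (α + k * θ) : ℂ) - (Real.sin (k * θ) : ℂ)) * hAD
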